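/- Let b ≥ 2 and let D be a finite nonempty set of nonnegative integers satisfying the Kenyon condition with respect to b (for example, D the digit set of a self-similar measure μ(b, #D, D) that is absolutely continuous with respect to Lebesgue measure). Then b divides #D, i.e., #D = b·k for some integer k ≥ 1. -/

import Mathlib

open Polynomial

/-- The mask polynomial `P_A(X) = ∑_{a ∈ A} X^a ∈ ℤ[X]` of a finite set of naturals. -/
noncomputable def mask (A : Finset ℕ) : Polynomial ℤ := ∑ a ∈ A, X ^ a

/-- The Kenyon condition with respect to `b`. -/
def Kenyon (b : ℕ) (D : Finset ℕ) : Prop :=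
  ∀ m : ℕ, 1 ≤ m → ∃ k : ℕ, 1 ≤ k ∧
    Polynomial.aeval (Complex.exp (2 * Real.pi * Complex.I * (m : ℂ) / (b : ℂ) ^ k)) (mask D) = 0

lemma mask_eval_one (D : Finset ℕ) : (mask D).eval 1 = (D.card : ℤ) := by
  simp [mask, eval_finset_sum]

lemma mask_ne_zero {D : Finset ℕ} (hD : D.Nonempty) : mask D ≠ 0 := by
  intro h
  have h1 := mask_eval_one D
  rw [h, eval_zero] at h1
  have : D.card = 0 := by exact_mod_cast h1.symm
  simp [Finset.card_eq_zero] at this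
  exact hD.ne_empty this

lemma cyc_dvd_mask {M : ℕ} (hM : 0 < M) {z : ℂ} (hz : IsPrimitiveRoot z M)
    {P : Polynomial ℤ} (h0 : Polynomial.aeval z P = 0) : cyclotomic M ℤ ∣ P := by
  rw [cyclotomic_eq_minpoly hz hM]
  exact minpoly.isIntegrallyClosed_dvd (hz.isIntegral hM) h0

lemma prod_cyc_dvd (p : ℕ) (hp : p.Prime) {P : Polynomial ℤ} (T : Finset ℕ) :
    (∀ s ∈ T, cyclotomic (p ^ s) ℤ ∣ P) → (∏ s ∈ T, cyclotomic (p ^ s) ℤ) ∣ P := by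
  classical
  induction T using Finset.induction_on with
  | empty => intro _; simp
  | @insert s T hsT ih =>
    intro hdvd
    have hprime : Prime (cyclotomic (p ^ s) ℤ) :=
      UniqueFactorizationMonoid.irreducible_iff_prime.mp
        (cyclotomic.irreducible (pow_pos hp.pos s))
    have hPd : cyclotomic (p ^ s) ℤ ∣ P := hdvd s (Finset.mem_insert_self s T)
    obtain ⟨R, hR⟩ := ih (fun t ht => hdvd t (Finset.mem_insert_of_mem ht))
    have hnd : ¬ cyclotomic (p ^ s) ℤ ∣ ∏ t ∈ T, cyclotomic (p ^ t) ℤ := by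
      intro hdv
      obtain ⟨t, htT, hdvt⟩ := hprime.exists_mem_finset_dvd hdv
      have heq : cyclotomic (p ^ s) ℤ = cyclotomic (p ^ t) ℤ :=
        Polynomial.eq_of_monic_of_associated (cyclotomic.monic _ _) (cyclotomic.monic _ _)
          (hprime.irreducible.associated_of_dvd
            (cyclotomic.irreducible (pow_pos hp.pos t)) hdvt)
      have : p ^ s = p ^ t := cyclotomic_injective (R := ℤ) heq
      have : s = t := Nat.pow_right_injective hp.two_le this
      exact hsT (this ▸ htT)
    have hdR : cyclotomic (p ^ s) ℤ ∣ R := by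
      have h1 : cyclotomic (p ^ s) ℤ ∣ (∏ t ∈ T, cyclotomic (p ^ t) ℤ) * R := hR ▸ hPd
      rcases hprime.dvd_or_dvd h1 with h | h
      · exact absurd h hnd
      · exact h
    obtain ⟨R', hR'⟩ := hdR
    rw [Finset.prod_insert hsT]
    exact ⟨R', by rw [hR, hR']; ring⟩

lemma mod_helper {a j s e : ℕ} (hj : j < a) (he : e < a) (hje : j + e = 0 ∨ j + e = a)
    (hse : (s + e) % a = 0) : s % a = j := by
  have hsa : s % a < a := Nat.mod_lt _ (by omega)
  have hea : e % a = e := Nat.mod_eq_of_lt he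
  have hadd : (s % a + e) % a = 0 := by
    rw [← hea, ← Nat.add_mod]; exact hse
  rcases Nat.lt_or_ge (s % a + e) a with h | h
  · rw [Nat.mod_eq_of_lt h] at hadd
    omega
  · have h2 : s % a + e - a < a := by omega
    rw [Nat.mod_eq_sub_mod h, Nat.mod_eq_of_lt h2] at hadd
    omega

lemma key_claim (b : ℕ) (hb : 2 ≤ b) (D : Finset ℕ) (hD : D.Nonempty) (hK : Kenyon b D)
    (p : ℕ) (hp : p.Prime) (hpb : p ∣ b) (j : ℕ) (hj : j < b.factorization p) :
    ∃ s : ℕ, 1 ≤ s ∧ s % (b.factorization p) = j ∧ cyclotomic (p ^ s) ℤ ∣ mask D := by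
  have hb0 : b ≠ 0 := by omega
  set a := b.factorization p with ha_def
  have ha : 1 ≤ a := hp.factorization_pos_of_dvd hb0 hpb
  set c := b / p ^ a with hc_def
  have hbc : p ^ a * c = b := Nat.ordProj_mul_ordCompl_eq_self b p
  have hpc : ¬ p ∣ c := Nat.not_dvd_ordCompl hp hb0
  have hc1 : 0 < c := by
    rcases Nat.eq_zero_or_pos c with h | h
    · exfalso; rw [h, mul_zero] at hbc; omega
    · exact h
  set Dg := (mask D).natDegree with hDg_def
  set e : ℕ := if j = 0 then 0 else a - j with he_def
  have he : e < a := by rw [he_def]; split <;> omega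
  have hje : j + e = 0 ∨ j + e = a := by rw [he_def]; split <;> omega
  set L := Dg + e with hL_def
  set m := p ^ e * c ^ L with hm_def
  have hm1 : 1 ≤ m := Nat.mul_pos (pow_pos hp.pos e) (pow_pos hc1 L)
  obtain ⟨k, hk1, hz⟩ := hK m hm1
  have hka : a ≤ a * k := Nat.le_mul_of_pos_right a hk1
  set s := a * k - e with hs_def
  have hs1 : 1 ≤ s := by omega
  have hes : e + s = a * k := by omega
  set w := c ^ (L - k) with hw_def
  set M := p ^ s * c ^ (k - L) with hM_def
  have hMpos : 0 < M := Nat.mul_pos (pow_pos hp.pos s) (pow_pos hc1 _)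
  have hbk : b ^ k = p ^ (a * k) * c ^ k := by rw [← hbc, mul_pow, ← pow_mul]
  have heq : m * M = b ^ k * w := by
    have h2 : L + (k - L) = k + (L - k) := by omega
    calc m * M = p ^ (e + s) * c ^ (L + (k - L)) := by
          rw [pow_add, pow_add]; ring
      _ = p ^ (a * k) * c ^ (k + (L - k)) := by rw [hes, h2]
      _ = b ^ k * w := by rw [pow_add, hbk]; ring
  have hcop : Nat.Coprime w M := by
    rcases le_total k L with h | h
    · have h0 : k - L = 0 := by omega
      rw [hw_def, hM_def, h0, pow_zero, mul_one]
      exact Nat.Coprime.pow _ _ ((hp.coprime_iff_not_dvd.mpr hpc).symm)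
    · have h0 : L - k = 0 := by omega
      rw [hw_def, h0, pow_zero]
      exact Nat.coprime_one_left _
  have hbkC : ((b : ℂ)) ^ k ≠ 0 := pow_ne_zero _ (by exact_mod_cast hb0)
  have hMC : ((M : ℂ)) ≠ 0 := by exact_mod_cast hMpos.ne'
  have hcast : (m : ℂ) * (M : ℂ) = ((b : ℂ)) ^ k * (w : ℂ) := by exact_mod_cast heq
  have hz' : IsPrimitiveRoot (Complex.exp (2 * Real.pi * Complex.I * (m : ℂ) / (b : ℂ) ^ k)) M := by
    have harg : 2 * (Real.pi : ℂ) * Complex.I * (m : ℂ) / (b : ℂ) ^ k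
        = 2 * (Real.pi : ℂ) * Complex.I * ((w : ℂ) / (M : ℂ)) := by
      rw [mul_div_assoc]
      congr 1
      rw [div_eq_div_iff hbkC hMC]
      linear_combination hcast
    rw [harg]
    exact Complex.isPrimitiveRoot_exp_of_coprime w M hMpos.ne' hcop
  have hcyc : cyclotomic M ℤ ∣ mask D := cyc_dvd_mask hMpos hz' hz
  have hdeg : M.totient ≤ Dg := by
    have h1 := Polynomial.natDegree_le_of_dvd hcyc (mask_ne_zero hD)
    rwa [natDegree_cyclotomic] at h1
  have hsle : s ≤ Dg := by
    have h1 : (p ^ s).totient = p ^ (s - 1) * (p - 1) := Nat.totient_prime_pow hp hs1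
    have h2 : (p ^ s).totient ≤ M.totient := by
      have hco : Nat.Coprime (p ^ s) (c ^ (k - L)) :=
        Nat.Coprime.pow _ _ (hp.coprime_iff_not_dvd.mpr hpc)
      rw [hM_def, Nat.totient_mul hco]
      exact Nat.le_mul_of_pos_right _ (Nat.totient_pos.mpr (pow_pos hc1 _))
    have h3 : s - 1 < 2 ^ (s - 1) := Nat.lt_two_pow_self
    have h4 : 2 ^ (s - 1) ≤ p ^ (s - 1) := Nat.pow_le_pow_left hp.two_le _
    have h5 : p ^ (s - 1) ≤ p ^ (s - 1) * (p - 1) :=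
      Nat.le_mul_of_pos_right _ (by have := hp.two_le; omega)
    omega
  have hkL : k ≤ L := by
    have : k ≤ a * k := Nat.le_mul_of_pos_left k ha
    omega
  have hM : M = p ^ s := by
    rw [hM_def, show k - L = 0 from by omega, pow_zero, mul_one]
  have hmod : s % a = j := by
    apply mod_helper hj he hje
    rw [show s + e = a * k from by omega]
    exact Nat.mul_mod_right a k
  exact ⟨s, hs1, hmod, hM ▸ hcyc⟩

lemma prime_pow_dvd_card (b : ℕ) (hb : 2 ≤ b) (D : Finset ℕ) (hD : D.Nonempty) (hK : Kenyon b D)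
    (p : ℕ) (hp : p.Prime) (hpb : p ∣ b) : p ^ (b.factorization p) ∣ D.card := by
  classical
  haveI : Fact p.Prime := ⟨hp⟩
  set a := b.factorization p with ha_def
  have hclaim := key_claim b hb D hD hK p hp hpb
  set f : ℕ → ℕ := fun j => if h : j < a then (hclaim j h).choose else 0 with hf_def
  have hf : ∀ j, j < a → 1 ≤ f j ∧ (f j) % a = j ∧ cyclotomic (p ^ (f j)) ℤ ∣ mask D := by
    intro j hj
    simp only [hf_def, dif_pos hj]
    exact (hclaim j hj).choose_spec
  set T := (Finset.range a).image f with hT_def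
  have hcard : T.card = a := by
    rw [hT_def, Finset.card_image_of_injOn, Finset.card_range]
    intro j1 h1 j2 h2 hfe
    have h1' := (hf j1 (Finset.mem_range.mp h1)).2.1
    have h2' := (hf j2 (Finset.mem_range.mp h2)).2.1
    rw [← h1', ← h2', hfe]
  have hprod : (∏ s ∈ T, cyclotomic (p ^ s) ℤ) ∣ mask D := by
    apply prod_cyc_dvd p hp
    intro s hs
    obtain ⟨j, hj, rfl⟩ := Finset.mem_image.mp hs
    exact (hf j (Finset.mem_range.mp hj)).2.2
  have heval : (∏ s ∈ T, cyclotomic (p ^ s) ℤ).eval 1 = (p : ℤ) ^ a := by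
    rw [eval_prod]
    rw [Finset.prod_congr rfl (g := fun _ => (p : ℤ)) ?_]
    · rw [Finset.prod_const, hcard]
    · intro s hs
      obtain ⟨j, hj, rfl⟩ := Finset.mem_image.mp hs
      have h1 := (hf j (Finset.mem_range.mp hj)).1
      rw [show f j = (f j - 1) + 1 from by omega]
      exact eval_one_cyclotomic_prime_pow _
  obtain ⟨R, hR⟩ := hprod
  have hdvd : (p : ℤ) ^ a ∣ (D.card : ℤ) := by
    rw [← mask_eval_one D, hR, eval_mul, heval]
    exact Dvd.intro _ rfl
  exact_mod_cast hdvd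

/-- If a finite nonempty `D` satisfies the Kenyon condition with respect to `b`, then
`#D = b·k` for some integer `k ≥ 1`. -/
theorem stmt19 (b : ℕ) (hb : 2 ≤ b) (D : Finset ℕ) (hD : D.Nonempty) (hK : Kenyon b D) :
    ∃ k : ℕ, 1 ≤ k ∧ D.card = b * k := by
  have hn0 : 0 < D.card := Finset.card_pos.mpr hD
  have hbn : b ∣ D.card := by
    rw [Nat.dvd_iff_prime_pow_dvd_dvd]
    intro p k hp hpk
    rcases Nat.eq_zero_or_pos k with rfl | hk
    · simp
    have hb0 : b ≠ 0 := by omega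
    have hpb : p ∣ b := dvd_trans (dvd_pow_self p hk.ne') hpk
    have hkle : k ≤ b.factorization p :=
      (Nat.Prime.pow_dvd_iff_le_factorization hp hb0).mp hpk
    exact dvd_trans (pow_dvd_pow p hkle)
      (prime_pow_dvd_card b hb D hD hK p hp hpb)
  refine ⟨D.card / b, ?_, (Nat.mul_div_cancel' hbn).symm⟩
  have hble : b ≤ D.card := Nat.le_of_dvd hn0 hbn
  exact (Nat.one_le_div_iff (by omega)).mpr hble
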